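/- For n > 1, let F_n be the probability distribution on [1, n] with F_n(x) = 1 − 1/x for 1 ≤ x < n and an atom of mass 1/n at n, and let μ_n be the product distribution of two i.i.d. values (v_1, v_2) drawn from F_n (a single unit-demand buyer and two items). Then: (a) for every n > 1, every item pricing together with every utility-maximizing selection has expected revenue at most 2 under μ_n; and (b) there exists N such that for all n ≥ N, the lottery menu L_n = {(1/2, 1/2, 5/2), (1, 0, 2 + 3n/8), (0, 1, 2 + 3n/8)} together with every utility-maximizing selection has expected revenue at least 2.2 under μ_n. In particular, for all n ≥ N the optimal lottery revenue under μ_n exceeds 1.1 times the optimal item-pricing revenue under μ_n. -/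

import Mathlib

open MeasureTheory

/-- A lottery over `m` items: allocation probabilities `q` with `q j ≥ 0`,
`∑ j, q j ≤ 1`, and a price `p ≥ 0`. -/
structure Lottery (m : ℕ) where
  q : Fin m → ℝ
  p : ℝ
  q_nonneg : ∀ j, 0 ≤ q j
  q_sum_le_one : ∑ j, q j ≤ 1
  p_nonneg : 0 ≤ p

/-- The (expected) utility of lottery `ℓ` at valuation `v`. -/
def Lottery.util {m : ℕ} (ℓ : Lottery m) (v : Fin m → ℝ) : ℝ :=
  (∑ j, ℓ.q j * v j) - ℓ.p

/-- The probability vector of a possibly-absent lottery (`⊥` ↦ 0). -/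
def selQ {m : ℕ} : Option (Lottery m) → Fin m → ℝ
  | some ℓ => ℓ.q
  | none => 0

/-- The price of a possibly-absent lottery (`⊥` ↦ 0). -/
def selP {m : ℕ} : Option (Lottery m) → ℝ
  | some ℓ => ℓ.p
  | none => 0

/-- `s` is a utility-maximizing selection for the lottery menu `L`. -/
structure IsSelection {m : ℕ} (L : Set (Lottery m))
    (s : (Fin m → ℝ) → Option (Lottery m)) : Prop where
  measQ : ∀ j, Measurable fun v => selQ (s v) j
  measP : Measurable fun v => selP (s v)
  buy_opt : ∀ v : Fin m → ℝ, (∀ j, 0 ≤ v j) → ∀ ℓ : Lottery m, s v = some ℓ →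
    ℓ ∈ L ∧ 0 ≤ ℓ.util v ∧ ∀ ℓ' ∈ L, ℓ'.util v ≤ ℓ.util v
  no_buy : ∀ v : Fin m → ℝ, (∀ j, 0 ≤ v j) → s v = none →
    ∀ ℓ ∈ L, ℓ.util v ≤ 0

/-- Expected revenue of a selection under the valuation distribution `μ`. -/
noncomputable def lotteryRevenue {m : ℕ} (μ : Measure (Fin m → ℝ))
    (s : (Fin m → ℝ) → Option (Lottery m)) : ℝ :=
  ∫ v, selP (s v) ∂μ

/-- An item pricing: every lottery in the menu allocates some item
deterministically (its probability vector is a standard basis vector). -/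
def IsItemPricing {m : ℕ} (L : Set (Lottery m)) : Prop :=
  ∀ ℓ ∈ L, ∃ j : Fin m, ℓ.q = fun j' => if j' = j then 1 else 0

/-- The optimal item-pricing revenue under `μ`. -/
noncomputable def optItemPricingRev {m : ℕ} (μ : Measure (Fin m → ℝ)) : ℝ :=
  sSup {r : ℝ | ∃ (L : Set (Lottery m)) (s : (Fin m → ℝ) → Option (Lottery m)),
    L.Nonempty ∧ IsItemPricing L ∧ IsSelection L s ∧ r = lotteryRevenue μ s}

/-- The optimal lottery revenue under `μ`. -/
noncomputable def optLotteryRev {m : ℕ} (μ : Measure (Fin m → ℝ)) : ℝ :=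
  sSup {r : ℝ | ∃ (L : Set (Lottery m)) (s : (Fin m → ℝ) → Option (Lottery m)),
    L.Nonempty ∧ IsSelection L s ∧ r = lotteryRevenue μ s}

/-- A dominant-strategy incentive compatible, individually rational
deterministic single-item auction for `m` bidders: `x v = some j` means bidder
`j` wins, `x v = none` means no winner; `pay v j ≥ 0` is bidder `j`'s payment. -/
structure IsAuction {m : ℕ} (x : (Fin m → ℝ) → Option (Fin m))
    (pay : (Fin m → ℝ) → Fin m → ℝ) : Prop where
  measX : ∀ j : Fin m, MeasurableSet {v | x v = some j}
  measPay : ∀ j : Fin m, Measurable fun v => pay v j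
  pay_nonneg : ∀ v j, 0 ≤ pay v j
  ic : ∀ v : Fin m → ℝ, (∀ j, 0 ≤ v j) → ∀ (j : Fin m) (v' : ℝ), 0 ≤ v' →
    (if x (Function.update v j v') = some j then v j else 0)
        - pay (Function.update v j v') j
      ≤ (if x v = some j then v j else 0) - pay v j
  ir : ∀ v : Fin m → ℝ, (∀ j, 0 ≤ v j) → ∀ j : Fin m,
    0 ≤ (if x v = some j then v j else 0) - pay v j

/-- Expected revenue of a single-item auction under `μ`. -/
noncomputable def auctionRevenue {m : ℕ} (μ : Measure (Fin m → ℝ))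
    (pay : (Fin m → ℝ) → Fin m → ℝ) : ℝ :=
  ∫ v, ∑ j, pay v j ∂μ

/-- The equal-revenue distribution truncated at `n`: its cdf is `1 - 1/x` on
`[1, n)` (density `1/x²` there), with an atom of mass `1/n` at `n`. -/
noncomputable def equalRevDist (n : ℝ) : Measure ℝ :=
  (volume.restrict (Set.Ico (1 : ℝ) n)).withDensity
      (fun x => ENNReal.ofReal (1 / x ^ 2)) +
    ENNReal.ofReal (1 / n) • Measure.dirac n

/-- The product distribution of two i.i.d. values drawn from the truncated
equal-revenue distribution. -/
noncomputable def equalRevMeasure (n : ℝ) : Measure (Fin 2 → ℝ) :=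
  Measure.pi fun _ : Fin 2 => equalRevDist n

/-- The lottery menu `{(1/2, 1/2, 5/2), (1, 0, 2 + 3n/8), (0, 1, 2 + 3n/8)}`. -/
def gapMenu (n : ℝ) : Set (Lottery 2) :=
  {ℓ : Lottery 2 | (ℓ.q = fun _ => 1 / 2) ∧ ℓ.p = 5 / 2} ∪
  {ℓ : Lottery 2 | ℓ.q = (fun j => if j = 0 then 1 else 0) ∧ ℓ.p = 2 + 3 * n / 8} ∪
  {ℓ : Lottery 2 | ℓ.q = (fun j => if j = 1 then 1 else 0) ∧ ℓ.p = 2 + 3 * n / 8}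

open scoped ENNReal

namespace ERD


lemma lint_Ico {a b : ℝ} (ha : 1 ≤ a) (hab : a ≤ b) :
    ∫⁻ x in Set.Ico a b, ENNReal.ofReal (1 / x ^ 2) = ENNReal.ofReal (1 / a - 1 / b) := by
  have h0 : (0:ℝ) ∉ Set.uIcc a b := by
    simp only [Set.mem_uIcc]
    push_neg
    constructor <;> intro h <;> nlinarith
  have hi : ∫ x in a..b, x ^ (-2 : ℤ) = (b ^ ((-2:ℤ) + 1) - a ^ ((-2:ℤ) + 1)) / ((-2:ℤ) + 1) := by
    exact integral_zpow (Or.inr ⟨by norm_num, h0⟩)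
  have hI : IntervalIntegrable (fun x : ℝ => x ^ (-2 : ℤ)) volume a b :=
    intervalIntegral.intervalIntegrable_zpow (Or.inr h0)
  have hmeq : ∀ x ∈ Set.Ico a b, (1 : ℝ) / x ^ 2 = x ^ (-2 : ℤ) := by
    intro x hx
    rw [zpow_neg]
    norm_num
  -- convert lintegral to integral
  rw [← MeasureTheory.ofReal_integral_eq_lintegral_ofReal]
  · congr 1
    have h1 : ∫ x in Set.Ico a b, (1 : ℝ) / x ^ 2 = ∫ x in Set.Ico a b, (x:ℝ) ^ (-2 : ℤ) := by
      apply setIntegral_congr_fun measurableSet_Ico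
      intro x hx; exact hmeq x hx
    rw [h1, MeasureTheory.integral_Ico_eq_integral_Ioo,
      ← MeasureTheory.integral_Ioc_eq_integral_Ioo,
      ← intervalIntegral.integral_of_le hab, hi]
    have ha' : a ≠ 0 := by linarith
    have hb' : b ≠ 0 := by nlinarith
    have he : ((-2:ℤ)+1) = -1 := by norm_num
    rw [he, zpow_neg, zpow_neg, zpow_one, zpow_one]
    push_cast
    field_simp
    ring
  · -- integrable
    have h2 : IntegrableOn (fun x : ℝ => x ^ (-2:ℤ)) (Set.Ico a b) volume := by
      rw [integrableOn_Ico_iff_integrableOn_Ioo]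
      apply (hI.1).mono_set Set.Ioo_subset_Ioc_self
    apply h2.congr_fun
    · intro x hx; exact (hmeq x hx).symm
    · exact measurableSet_Ico
  · filter_upwards with x
    positivity

variable {n : ℝ}

lemma nu_apply (hn : 1 < n) {A : Set ℝ} (hA : MeasurableSet A) :
    equalRevDist n A =
      (∫⁻ x in A ∩ Set.Ico 1 n, ENNReal.ofReal (1 / x ^ 2)) +
        ENNReal.ofReal (1 / n) * (Set.indicator A (fun _ => 1) n) := by
  rw [equalRevDist, Measure.add_apply, withDensity_apply _ hA,
    Measure.restrict_restrict hA, Measure.smul_apply, Measure.dirac_apply' _ hA]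
  rfl

lemma nu_Ico (hn : 1 < n) {a b : ℝ} (ha : 1 ≤ a) (hab : a ≤ b) (hb : b ≤ n) :
    equalRevDist n (Set.Ico a b) = ENNReal.ofReal (1 / a - 1 / b) := by
  rw [nu_apply hn measurableSet_Ico]
  have h1 : Set.Ico a b ∩ Set.Ico 1 n = Set.Ico a b := by
    apply Set.inter_eq_self_of_subset_left
    intro x hx; exact ⟨le_trans ha hx.1, lt_of_lt_of_le hx.2 hb⟩
  have h2 : n ∉ Set.Ico a b := by
    intro h; exact absurd h.2 (not_lt.mpr hb)
  rw [h1, lint_Ico ha hab, Set.indicator_of_notMem h2, mul_zero, add_zero]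

lemma nu_Ici (hn : 1 < n) {a : ℝ} (ha : 1 ≤ a) (han : a ≤ n) :
    equalRevDist n (Set.Ici a) = ENNReal.ofReal (1 / a) := by
  rw [nu_apply hn measurableSet_Ici]
  have h1 : Set.Ici a ∩ Set.Ico 1 n = Set.Ico a n := by
    ext x; simp only [Set.mem_inter_iff, Set.mem_Ici, Set.mem_Ico]
    constructor
    · rintro ⟨h1, h2, h3⟩; exact ⟨h1, h3⟩
    · rintro ⟨h1, h2⟩; exact ⟨h1, le_trans ha h1, h2⟩
  rw [h1, lint_Ico ha han, Set.indicator_of_mem (Set.mem_Ici.mpr han), mul_one,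
    ← ENNReal.ofReal_add (by
      have : 1/n ≤ 1/a := by
        apply one_div_le_one_div_of_le <;> linarith
      linarith) (by positivity)]
  congr 1; ring

lemma nu_Icc_compl (hn : 1 < n) : equalRevDist n (Set.Icc 1 n)ᶜ = 0 := by
  rw [nu_apply hn (measurableSet_Icc.compl)]
  have h1 : (Set.Icc 1 n)ᶜ ∩ Set.Ico 1 n = ∅ := by
    rw [Set.eq_empty_iff_forall_notMem]
    rintro x ⟨hc, hx1, hx2⟩
    exact hc ⟨hx1, le_of_lt hx2⟩
  have h2 : n ∉ (Set.Icc 1 n)ᶜ := by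
    simp only [Set.mem_compl_iff, not_not, Set.mem_Icc]
    constructor <;> linarith
  rw [h1, Set.indicator_of_notMem h2, mul_zero, add_zero]
  simp

lemma nu_univ (hn : 1 < n) : equalRevDist n Set.univ = 1 := by
  have : (Set.univ : Set ℝ) = Set.Ici 1 ∪ (Set.Icc 1 n)ᶜ := by
    ext x
    simp only [Set.mem_univ, Set.mem_union, Set.mem_Ici, Set.mem_compl_iff, Set.mem_Icc, true_iff]
    by_cases h : 1 ≤ x
    · exact Or.inl h
    · exact Or.inr (fun hc => h hc.1)
  rw [this]
  have h0 := nu_Icc_compl hn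
  have h1 := nu_Ici hn (le_refl 1) (le_of_lt hn)
  have h2 : equalRevDist n (Set.Ici 1 ∪ (Set.Icc 1 n)ᶜ) ≤ 1 := by
    calc equalRevDist n (Set.Ici 1 ∪ (Set.Icc 1 n)ᶜ)
        ≤ equalRevDist n (Set.Ici 1) + equalRevDist n (Set.Icc 1 n)ᶜ := measure_union_le _ _
      _ = 1 := by rw [h0, h1]; simp
  have h3 : (1:ℝ≥0∞) ≤ equalRevDist n (Set.Ici 1 ∪ (Set.Icc 1 n)ᶜ) := by
    calc (1:ℝ≥0∞) = equalRevDist n (Set.Ici 1) := by rw [h1]; simp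
      _ ≤ _ := measure_mono Set.subset_union_left
  exact le_antisymm h2 h3

lemma nu_prob (hn : 1 < n) : IsProbabilityMeasure (equalRevDist n) := ⟨nu_univ hn⟩

lemma nu_Ioi (hn : 1 < n) {a : ℝ} (ha : 1 ≤ a) (han : a < n) :
    equalRevDist n (Set.Ioi a) = ENNReal.ofReal (1 / a) := by
  have hs : equalRevDist n {a} = 0 := by
    rw [nu_apply hn (measurableSet_singleton a)]
    have h1 : ({a} : Set ℝ) ∩ Set.Ico 1 n ⊆ {a} := Set.inter_subset_left
    have h2 : n ∉ ({a} : Set ℝ) := by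
      simp only [Set.mem_singleton_iff]; exact fun h => absurd h.symm (ne_of_lt han)
    rw [Set.indicator_of_notMem h2, mul_zero, add_zero]
    refine le_antisymm ?_ (zero_le)
    calc ∫⁻ x in {a} ∩ Set.Ico 1 n, ENNReal.ofReal (1 / x ^ 2)
        ≤ ∫⁻ _ in {a} ∩ Set.Ico 1 n, 1 := by
          apply lintegral_mono_ae
          filter_upwards [ae_restrict_mem ((measurableSet_singleton a).inter measurableSet_Ico)]
            with x hx
          rw [Set.mem_inter_iff, Set.mem_singleton_iff] at hx
          rw [hx.1]
          refine ENNReal.ofReal_le_one.mpr ?_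
          rw [div_le_one (by nlinarith)]
          nlinarith
      _ = volume ({a} ∩ Set.Ico 1 n) := by simp
      _ ≤ volume {a} := measure_mono h1
      _ = 0 := by simp
  have : Set.Ici a = Set.Ioi a ∪ {a} := by
    ext x; simp only [Set.mem_Ici, Set.mem_union, Set.mem_Ioi, Set.mem_singleton_iff]
    constructor
    · intro h; rcases lt_or_eq_of_le h with h | h
      · exact Or.inl h
      · exact Or.inr h.symm
    · rintro (h | h)
      · exact le_of_lt h
      · exact le_of_eq h.symm
  have key := nu_Ici hn ha (le_of_lt han)
  refine le_antisymm ?_ ?_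
  · rw [← key]; exact measure_mono Set.Ioi_subset_Ici_self
  · rw [← key, this]
    calc equalRevDist n (Set.Ioi a ∪ {a}) ≤
        equalRevDist n (Set.Ioi a) + equalRevDist n {a} := measure_union_le _ _
      _ = equalRevDist n (Set.Ioi a) := by rw [hs, add_zero]


variable {n : ℝ}

lemma sigmaFin (hn : 1 < n) : SigmaFinite (equalRevDist n) := by
  haveI := nu_prob (n := n) hn
  infer_instance

lemma mu_rect (hn : 1 < n) {A B : Set ℝ} (hA : MeasurableSet A) (hB : MeasurableSet B) :
    equalRevMeasure n {v | v 0 ∈ A ∧ v 1 ∈ B} = equalRevDist n A * equalRevDist n B := by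
  haveI := nu_prob (n := n) hn
  have hset : {v : Fin 2 → ℝ | v 0 ∈ A ∧ v 1 ∈ B} = Set.pi Set.univ ![A, B] := by
    ext v
    simp only [Set.mem_setOf_eq, Set.mem_pi, Set.mem_univ, forall_true_left]
    constructor
    · rintro ⟨h0, h1⟩ i
      fin_cases i <;> simpa
    · intro h
      exact ⟨by simpa using h 0, by simpa using h 1⟩
  rw [hset, equalRevMeasure, Measure.pi_pi, Fin.prod_univ_two]
  simp

lemma mu_prob (hn : 1 < n) : IsProbabilityMeasure (equalRevMeasure n) := by
  haveI := nu_prob (n := n) hn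
  rw [equalRevMeasure]
  infer_instance

lemma mu_ae (hn : 1 < n) :
    ∀ᵐ v ∂(equalRevMeasure n), ∀ j, v j ∈ Set.Icc (1:ℝ) n := by
  rw [MeasureTheory.ae_iff]
  have hsub : {v : Fin 2 → ℝ | ¬∀ j, v j ∈ Set.Icc (1:ℝ) n} ⊆
      {v : Fin 2 → ℝ | v 0 ∈ (Set.Icc (1:ℝ) n)ᶜ ∧ v 1 ∈ Set.univ} ∪
      {v : Fin 2 → ℝ | v 0 ∈ Set.univ ∧ v 1 ∈ (Set.Icc (1:ℝ) n)ᶜ} := by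
    intro v hv
    simp only [Set.mem_setOf_eq, not_forall] at hv
    obtain ⟨j, hj⟩ := hv
    fin_cases j
    · exact Or.inl ⟨hj, trivial⟩
    · exact Or.inr ⟨trivial, hj⟩
  refine measure_mono_null hsub (le_antisymm ?_ (zero_le))
  calc equalRevMeasure n _ ≤ _ := measure_union_le _ _
    _ ≤ 0 := by
        rw [mu_rect hn measurableSet_Icc.compl MeasurableSet.univ,
          mu_rect hn MeasurableSet.univ measurableSet_Icc.compl,
          nu_Icc_compl hn]
        simp

lemma item_util {L : Set (Lottery 2)} (hip : IsItemPricing L) {ℓ : Lottery 2} (hl : ℓ ∈ L)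
    (v : Fin 2 → ℝ) : ∃ j : Fin 2, ℓ.q = (fun j' => if j' = j then 1 else 0) ∧
      ℓ.util v = v j - ℓ.p := by
  obtain ⟨j, hj⟩ := hip ℓ hl
  refine ⟨j, hj, ?_⟩
  rw [Lottery.util, hj, Fin.sum_univ_two]
  fin_cases j <;> simp

lemma price_bound (hn : 1 < n) {p : ℝ} (hp : 0 ≤ p) :
    p * (equalRevDist n (Set.Ici p)).toReal ≤ 1 := by
  haveI := nu_prob (n := n) hn
  rcases le_or_gt p 1 with h1 | h1
  · have hm : (equalRevDist n (Set.Ici p)).toReal ≤ 1 := by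
      have := prob_le_one (μ := equalRevDist n) (s := Set.Ici p)
      calc (equalRevDist n (Set.Ici p)).toReal ≤ (1 : ℝ≥0∞).toReal :=
            ENNReal.toReal_mono ENNReal.one_ne_top this
        _ = 1 := by simp
    calc p * (equalRevDist n (Set.Ici p)).toReal ≤ 1 * 1 :=
          mul_le_mul h1 hm (ENNReal.toReal_nonneg) zero_le_one
      _ = 1 := by simp
  · rcases le_or_gt p n with h2 | h2
    · rw [nu_Ici hn (le_of_lt h1) h2, ENNReal.toReal_ofReal (by positivity)]
      rw [mul_one_div, div_le_one (by linarith)]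
    · have h0 : equalRevDist n (Set.Ici p) = 0 := by
        refine measure_mono_null ?_ (nu_Icc_compl hn)
        intro x hx
        simp only [Set.mem_Ici] at hx
        simp only [Set.mem_compl_iff, Set.mem_Icc, not_and, not_le]
        intro _
        linarith
      rw [h0]
      simp

lemma selP_nonneg {m : ℕ} (o : Option (Lottery m)) : 0 ≤ selP o := by
  cases o with
  | none => simp [selP]
  | some ℓ => exact ℓ.p_nonneg

lemma partA (hn : 1 < n) (L : Set (Lottery 2)) (s : (Fin 2 → ℝ) → Option (Lottery 2))
    (hip : IsItemPricing L) (hs : IsSelection L s) :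
    lotteryRevenue (equalRevMeasure n) s ≤ 2 := by
  haveI := mu_prob (n := n) hn
  set μ := equalRevMeasure n
  set Pset : Fin 2 → Set ℝ := fun j =>
    {p | ∃ ℓ ∈ L, ℓ.q = (fun j' => if j' = j then 1 else 0) ∧ ℓ.p = p} with hPset
  set pj : Fin 2 → ℝ := fun j => sInf (Pset j) with hpj
  have hpj0 : ∀ j, 0 ≤ pj j := by
    intro j
    apply Real.sInf_nonneg
    rintro x ⟨ℓ, _, _, rfl⟩
    exact ℓ.p_nonneg
  set C : Fin 2 → Set (Fin 2 → ℝ) := fun j => {v | pj j ≤ v j} with hC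
  have hCmeas : ∀ j, MeasurableSet (C j) :=
    fun j => measurableSet_le measurable_const (measurable_pi_apply j)
  set h : (Fin 2 → ℝ) → ℝ := fun v =>
    (C 0).indicator (fun _ => pj 0) v + (C 1).indicator (fun _ => pj 1) v with hh
  have hkey : ∀ v : Fin 2 → ℝ, (∀ j, v j ∈ Set.Icc (1:ℝ) n) → selP (s v) ≤ h v := by
    intro v hv
    have hvn : ∀ j, 0 ≤ v j := fun j => le_trans zero_le_one (hv j).1
    have hind : ∀ j, 0 ≤ (C j).indicator (fun _ => pj j) v := by
      intro j
      exact Set.indicator_nonneg (fun _ _ => hpj0 j) v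
    cases hsv : s v with
    | none =>
      simpa [selP] using add_nonneg (hind 0) (hind 1)
    | some ℓ =>
      obtain ⟨hmem, hir, hmax⟩ := hs.buy_opt v hvn ℓ hsv
      obtain ⟨j, hq, hu⟩ := item_util hip hmem v
      have hple : ℓ.p ∈ Pset j := ⟨ℓ, hmem, hq, rfl⟩
      have h1 : pj j ≤ ℓ.p := csInf_le ⟨0, by rintro x ⟨ℓ', _, _, rfl⟩; exact ℓ'.p_nonneg⟩ hple
      have h2 : ℓ.p ≤ pj j := by
        apply le_csInf ⟨ℓ.p, hple⟩
        rintro p' ⟨ℓ', hmem', hq', rfl⟩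
        have := hmax ℓ' hmem'
        obtain ⟨j', hq'', hu'⟩ := item_util hip hmem' v
        have hjj : j' = j := by
          have := hq'.symm.trans hq''
          by_contra hne
          have := congrFun this j'
          simp [hne] at this
        rw [hu', hjj] at this
        rw [hu] at this
        linarith
      have hpeq : ℓ.p = pj j := le_antisymm h2 h1
      have hvj : pj j ≤ v j := by
        rw [hu] at hir
        linarith [hpeq ▸ hir]
      have hCj : v ∈ C j := hvj
      have : (C j).indicator (fun _ => pj j) v = pj j := Set.indicator_of_mem hCj _
      have hsel : selP (some ℓ) = pj j := hpeq
      have hgoal : selP (some ℓ) = ℓ.p := rfl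
      rw [hgoal, hpeq]
      have hjc : j = 0 ∨ j = 1 := by omega
      rcases hjc with rfl | rfl
      · have e0 : (C 0).indicator (fun _ => pj 0) v = pj 0 := Set.indicator_of_mem hCj _
        have h9 := hind 1
        simp only [hh]
        linarith
      · have e1 : (C 1).indicator (fun _ => pj 1) v = pj 1 := Set.indicator_of_mem hCj _
        have h9 := hind 0
        simp only [hh]
        linarith
  -- integrability
  have hint_ind : ∀ j, Integrable ((C j).indicator (fun _ => pj j)) μ := by
    intro j
    exact (integrable_const (pj j)).indicator (hCmeas j)
  have hinth : Integrable h μ := (hint_ind 0).add (hint_ind 1)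
  have haes : ∀ᵐ v ∂μ, selP (s v) ≤ h v := by
    filter_upwards [mu_ae hn] with v hv using hkey v hv
  have hints : Integrable (fun v => selP (s v)) μ := by
    apply Integrable.mono' hinth hs.measP.aestronglyMeasurable
    filter_upwards [haes] with v hv
    rw [Real.norm_eq_abs, abs_of_nonneg (selP_nonneg _)]
    exact hv
  have hle : lotteryRevenue μ s ≤ ∫ v, h v ∂μ := integral_mono_ae hints hinth haes
  haveI := nu_prob (n := n) hn
  have hCval : ∀ j, μ (C j) ≤ equalRevDist n (Set.Ici (pj j)) := by
    intro j
    have hjc : j = 0 ∨ j = 1 := by omega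
    rcases hjc with rfl | rfl
    · have e : C 0 = {v : Fin 2 → ℝ | v 0 ∈ Set.Ici (pj 0) ∧ v 1 ∈ Set.univ} := by
        ext v; simp [hC]
      rw [e, mu_rect hn measurableSet_Ici MeasurableSet.univ, nu_univ hn, mul_one]
    · have e : C 1 = {v : Fin 2 → ℝ | v 0 ∈ Set.univ ∧ v 1 ∈ Set.Ici (pj 1)} := by
        ext v; simp [hC]
      rw [e, mu_rect hn MeasurableSet.univ measurableSet_Ici, nu_univ hn, one_mul]
  have hinteg : ∫ v, h v ∂μ =
      (μ (C 0)).toReal * pj 0 + (μ (C 1)).toReal * pj 1 := by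
    rw [hh, integral_add (hint_ind 0) (hint_ind 1),
      integral_indicator_const _ (hCmeas 0), integral_indicator_const _ (hCmeas 1)]
    simp [smul_eq_mul, Measure.real]
  have hb : ∀ j, (μ (C j)).toReal * pj j ≤ 1 := by
    intro j
    calc (μ (C j)).toReal * pj j ≤ (equalRevDist n (Set.Ici (pj j))).toReal * pj j := by
          apply mul_le_mul_of_nonneg_right
            (ENNReal.toReal_mono (measure_ne_top _ _) (hCval j)) (hpj0 j)
      _ = pj j * (equalRevDist n (Set.Ici (pj j))).toReal := mul_comm _ _
      _ ≤ 1 := price_bound hn (hpj0 j)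
  calc lotteryRevenue μ s ≤ ∫ v, h v ∂μ := hle
    _ = (μ (C 0)).toReal * pj 0 + (μ (C 1)).toReal * pj 1 := hinteg
    _ ≤ 1 + 1 := add_le_add (hb 0) (hb 1)
    _ = 2 := by norm_num

noncomputable def lotL : Lottery 2 :=
  ⟨fun _ => 1/2, 5/2, fun _ => by norm_num, by rw [Fin.sum_univ_two]; norm_num, by norm_num⟩

noncomputable def lot0 (n : ℝ) (hn : 0 ≤ n) : Lottery 2 :=
  ⟨fun j => if j = 0 then 1 else 0, 2 + 3*n/8,
    fun j => by split <;> norm_num,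
    by rw [Fin.sum_univ_two]; norm_num, by linarith⟩

noncomputable def lot1 (n : ℝ) (hn : 0 ≤ n) : Lottery 2 :=
  ⟨fun j => if j = 1 then 1 else 0, 2 + 3*n/8,
    fun j => by split <;> norm_num,
    by rw [Fin.sum_univ_two]; norm_num, by linarith⟩

lemma lotL_mem {n : ℝ} : lotL ∈ gapMenu n := Or.inl (Or.inl ⟨rfl, rfl⟩)
lemma lot0_mem {n : ℝ} (hn : 0 ≤ n) : lot0 n hn ∈ gapMenu n := Or.inl (Or.inr ⟨rfl, rfl⟩)
lemma lot1_mem {n : ℝ} (hn : 0 ≤ n) : lot1 n hn ∈ gapMenu n := Or.inr ⟨rfl, rfl⟩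

lemma util_half {ℓ : Lottery 2} (hq : ℓ.q = fun _ => (1:ℝ)/2) (v : Fin 2 → ℝ) :
    ℓ.util v = (v 0 + v 1)/2 - ℓ.p := by
  rw [Lottery.util, hq, Fin.sum_univ_two]; ring

lemma util_item0 {ℓ : Lottery 2} (hq : ℓ.q = fun j => if j = 0 then (1:ℝ) else 0)
    (v : Fin 2 → ℝ) : ℓ.util v = v 0 - ℓ.p := by
  rw [Lottery.util, hq, Fin.sum_univ_two]
  norm_num

lemma util_item1 {ℓ : Lottery 2} (hq : ℓ.q = fun j => if j = 1 then (1:ℝ) else 0)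
    (v : Fin 2 → ℝ) : ℓ.util v = v 1 - ℓ.p := by
  rw [Lottery.util, hq, Fin.sum_univ_two]
  norm_num

lemma gap_cases {n : ℝ} {ℓ : Lottery 2} (h : ℓ ∈ gapMenu n) :
    ((ℓ.q = fun _ => (1:ℝ)/2) ∧ ℓ.p = 5/2) ∨
    ((ℓ.q = fun j => if j = 0 then (1:ℝ) else 0) ∧ ℓ.p = 2 + 3*n/8) ∨
    ((ℓ.q = fun j => if j = 1 then (1:ℝ) else 0) ∧ ℓ.p = 2 + 3*n/8) := by
  rcases h with (h | h) | h
  · exact Or.inl h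
  · exact Or.inr (Or.inl h)
  · exact Or.inr (Or.inr h)

set_option maxHeartbeats 2000000 in
lemma partB {n : ℝ} (hn : (100000000:ℝ) ≤ n) (s : (Fin 2 → ℝ) → Option (Lottery 2))
    (hs : IsSelection (gapMenu n) s) :
    (2.21:ℝ) ≤ lotteryRevenue (equalRevMeasure n) s := by
  have hn1 : (1:ℝ) < n := by linarith
  have hn0 : (0:ℝ) ≤ n := by linarith
  haveI := mu_prob (n := n) hn1
  haveI := nu_prob (n := n) hn1
  set μ := equalRevMeasure n with hμ
  set P : ℝ := 2 + 3*n/8 with hP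
  set c : ℝ := 3*n/4 - 1 with hc
  have hcpos : (0:ℝ) < c := by rw [hc]; linarith
  have hcbig : (94795:ℝ) ≤ c := by rw [hc]; linarith
  -- strips
  set U0 : Set (Fin 2 → ℝ) := {v | v 0 ∈ Set.Ioi (1:ℝ) ∧ v 1 ∈ Set.Ici (4:ℝ)} with hU0
  set U1 : Set (Fin 2 → ℝ) := {v | v 0 ∈ Set.Ioi (3/2:ℝ) ∧ v 1 ∈ Set.Ico (7/2:ℝ) 4} with hU1
  set U2 : Set (Fin 2 → ℝ) := {v | v 0 ∈ Set.Ioi (2:ℝ) ∧ v 1 ∈ Set.Ico (3:ℝ) (7/2)} with hU2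
  set U3 : Set (Fin 2 → ℝ) := {v | v 0 ∈ Set.Ioi (5/2:ℝ) ∧ v 1 ∈ Set.Ico (5/2:ℝ) 3} with hU3
  set U4 : Set (Fin 2 → ℝ) := {v | v 0 ∈ Set.Ioi (3:ℝ) ∧ v 1 ∈ Set.Ico (2:ℝ) (5/2)} with hU4
  set U5 : Set (Fin 2 → ℝ) := {v | v 0 ∈ Set.Ioi (7/2:ℝ) ∧ v 1 ∈ Set.Ico (3/2:ℝ) 2} with hU5
  set U6 : Set (Fin 2 → ℝ) := {v | v 0 ∈ Set.Ioi (4:ℝ) ∧ v 1 ∈ Set.Ico (1:ℝ) (3/2)} with hU6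
  set B1 : Set (Fin 2 → ℝ) := {v | v 0 ∈ Set.Ioi (c + 1000) ∧ v 1 ∈ Set.Ico (1:ℝ) 1000} with hB1
  set B2 : Set (Fin 2 → ℝ) := {v | v 0 ∈ Set.Ico (1:ℝ) 1000 ∧ v 1 ∈ Set.Ioi (c + 1000)} with hB2
  set U : Set (Fin 2 → ℝ) := U0 ∪ U1 ∪ U2 ∪ U3 ∪ U4 ∪ U5 ∪ U6 with hU
  set W : Set (Fin 2 → ℝ) := B1 ∪ B2 with hW
  have hmeas0 : Measurable fun v : Fin 2 → ℝ => v 0 := measurable_pi_apply 0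
  have hmeas1 : Measurable fun v : Fin 2 → ℝ => v 1 := measurable_pi_apply 1
  have hmU0 : MeasurableSet U0 := (hmeas0 measurableSet_Ioi).inter (hmeas1 measurableSet_Ici)
  have hmU1 : MeasurableSet U1 := (hmeas0 measurableSet_Ioi).inter (hmeas1 measurableSet_Ico)
  have hmU2 : MeasurableSet U2 := (hmeas0 measurableSet_Ioi).inter (hmeas1 measurableSet_Ico)
  have hmU3 : MeasurableSet U3 := (hmeas0 measurableSet_Ioi).inter (hmeas1 measurableSet_Ico)
  have hmU4 : MeasurableSet U4 := (hmeas0 measurableSet_Ioi).inter (hmeas1 measurableSet_Ico)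
  have hmU5 : MeasurableSet U5 := (hmeas0 measurableSet_Ioi).inter (hmeas1 measurableSet_Ico)
  have hmU6 : MeasurableSet U6 := (hmeas0 measurableSet_Ioi).inter (hmeas1 measurableSet_Ico)
  have hmB1 : MeasurableSet B1 := (hmeas0 measurableSet_Ioi).inter (hmeas1 measurableSet_Ico)
  have hmB2 : MeasurableSet B2 := (hmeas0 measurableSet_Ico).inter (hmeas1 measurableSet_Ioi)
  have hmU : MeasurableSet U :=
    ((((((hmU0.union hmU1).union hmU2).union hmU3).union hmU4).union hmU5).union hmU6)
  have hmW : MeasurableSet W := hmB1.union hmB2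
  -- measures of pieces
  have mU0 : μ U0 = ENNReal.ofReal (1/4) := by
    rw [hU0, mu_rect hn1 measurableSet_Ioi measurableSet_Ici,
      nu_Ioi hn1 (by norm_num) (by linarith), nu_Ici hn1 (by norm_num) (by linarith)]
    rw [← ENNReal.ofReal_mul (by norm_num)]
    norm_num
  have mU1 : μ U1 = ENNReal.ofReal (1/42) := by
    rw [hU1, mu_rect hn1 measurableSet_Ioi measurableSet_Ico,
      nu_Ioi hn1 (by norm_num) (by linarith),
      nu_Ico hn1 (by norm_num) (by norm_num) (by linarith),
      ← ENNReal.ofReal_mul (by norm_num)]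
    norm_num
  have mU2 : μ U2 = ENNReal.ofReal (1/42) := by
    rw [hU2, mu_rect hn1 measurableSet_Ioi measurableSet_Ico,
      nu_Ioi hn1 (by norm_num) (by linarith),
      nu_Ico hn1 (by norm_num) (by norm_num) (by linarith),
      ← ENNReal.ofReal_mul (by norm_num)]
    norm_num
  have mU3 : μ U3 = ENNReal.ofReal (2/75) := by
    rw [hU3, mu_rect hn1 measurableSet_Ioi measurableSet_Ico,
      nu_Ioi hn1 (by norm_num) (by linarith),
      nu_Ico hn1 (by norm_num) (by norm_num) (by linarith),
      ← ENNReal.ofReal_mul (by norm_num)]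
    norm_num
  have mU4 : μ U4 = ENNReal.ofReal (1/30) := by
    rw [hU4, mu_rect hn1 measurableSet_Ioi measurableSet_Ico,
      nu_Ioi hn1 (by norm_num) (by linarith),
      nu_Ico hn1 (by norm_num) (by norm_num) (by linarith),
      ← ENNReal.ofReal_mul (by norm_num)]
    norm_num
  have mU5 : μ U5 = ENNReal.ofReal (1/21) := by
    rw [hU5, mu_rect hn1 measurableSet_Ioi measurableSet_Ico,
      nu_Ioi hn1 (by norm_num) (by linarith),
      nu_Ico hn1 (by norm_num) (by norm_num) (by linarith),
      ← ENNReal.ofReal_mul (by norm_num)]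
    norm_num
  have mU6 : μ U6 = ENNReal.ofReal (1/12) := by
    rw [hU6, mu_rect hn1 measurableSet_Ioi measurableSet_Ico,
      nu_Ioi hn1 (by norm_num) (by linarith),
      nu_Ico hn1 (by norm_num) (by norm_num) (by linarith),
      ← ENNReal.ofReal_mul (by norm_num)]
    norm_num
  have hc1000 : 1 ≤ c + 1000 := by linarith
  have hc1000n : c + 1000 < n := by rw [hc]; linarith
  have mB1 : μ B1 = ENNReal.ofReal ((1/(c+1000)) * (999/1000)) := by
    rw [hB1, mu_rect hn1 measurableSet_Ioi measurableSet_Ico,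
      nu_Ioi hn1 hc1000 hc1000n,
      nu_Ico hn1 (by norm_num) (by norm_num) (by linarith),
      ← ENNReal.ofReal_mul (by positivity)]
    norm_num
  have mB2 : μ B2 = ENNReal.ofReal ((1/(c+1000)) * (999/1000)) := by
    rw [hB2, mu_rect hn1 measurableSet_Ico measurableSet_Ioi,
      nu_Ioi hn1 hc1000 hc1000n,
      nu_Ico hn1 (by norm_num) (by norm_num) (by linarith),
      ← ENNReal.ofReal_mul (by norm_num)]
    rw [mul_comm]
    norm_num
  -- disjointness and total measures
  have dis : ∀ (x y : Set (Fin 2 → ℝ)), (∀ v, v ∈ x → v ∈ y → False) → Disjoint x y := by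
    intro x y h
    exact Set.disjoint_left.mpr (fun v hv hv' => h v hv hv')
  have bU0 : ∀ v ∈ U0, (4:ℝ) ≤ v 1 := fun v h => Set.mem_Ici.mp h.2
  have bU1 : ∀ v ∈ U1, (7/2:ℝ) ≤ v 1 ∧ v 1 < 4 := fun v h => Set.mem_Ico.mp h.2
  have bU2 : ∀ v ∈ U2, (3:ℝ) ≤ v 1 ∧ v 1 < 7/2 := fun v h => Set.mem_Ico.mp h.2
  have bU3 : ∀ v ∈ U3, (5/2:ℝ) ≤ v 1 ∧ v 1 < 3 := fun v h => Set.mem_Ico.mp h.2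
  have bU4 : ∀ v ∈ U4, (2:ℝ) ≤ v 1 ∧ v 1 < 5/2 := fun v h => Set.mem_Ico.mp h.2
  have bU5 : ∀ v ∈ U5, (3/2:ℝ) ≤ v 1 ∧ v 1 < 2 := fun v h => Set.mem_Ico.mp h.2
  have bU6 : ∀ v ∈ U6, (1:ℝ) ≤ v 1 ∧ v 1 < 3/2 := fun v h => Set.mem_Ico.mp h.2
  have mU : μ U = ENNReal.ofReal (171/350) := by
    have d1 : Disjoint U0 U1 := by
      apply dis; intro v h h'
      have := bU0 v h; have := bU1 v h'; linarith [this.2]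
    have d2 : Disjoint (U0 ∪ U1) U2 := by
      apply dis; rintro v (h | h) h' <;>
        [have h2 := bU0 v h; have h2 := (bU1 v h).1] <;> linarith [(bU2 v h').2]
    have d3 : Disjoint (U0 ∪ U1 ∪ U2) U3 := by
      apply dis; rintro v ((h | h) | h) h' <;>
        [have h2 := bU0 v h; have h2 := (bU1 v h).1; have h2 := (bU2 v h).1] <;>
        linarith [(bU3 v h').2]
    have d4 : Disjoint (U0 ∪ U1 ∪ U2 ∪ U3) U4 := by
      apply dis; rintro v (((h | h) | h) | h) h' <;>
        [have h2 := bU0 v h; have h2 := (bU1 v h).1; have h2 := (bU2 v h).1;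
          have h2 := (bU3 v h).1] <;> linarith [(bU4 v h').2]
    have d5 : Disjoint (U0 ∪ U1 ∪ U2 ∪ U3 ∪ U4) U5 := by
      apply dis; rintro v ((((h | h) | h) | h) | h) h' <;>
        [have h2 := bU0 v h; have h2 := (bU1 v h).1; have h2 := (bU2 v h).1;
          have h2 := (bU3 v h).1; have h2 := (bU4 v h).1] <;> linarith [(bU5 v h').2]
    have d6 : Disjoint (U0 ∪ U1 ∪ U2 ∪ U3 ∪ U4 ∪ U5) U6 := by
      apply dis; rintro v (((((h | h) | h) | h) | h) | h) h' <;>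
        [have h2 := bU0 v h; have h2 := (bU1 v h).1; have h2 := (bU2 v h).1;
          have h2 := (bU3 v h).1; have h2 := (bU4 v h).1; have h2 := (bU5 v h).1] <;>
        linarith [(bU6 v h').2]
    rw [hU, measure_union d6 hmU6, measure_union d5 hmU5, measure_union d4 hmU4,
      measure_union d3 hmU3, measure_union d2 hmU2, measure_union d1 hmU1,
      mU0, mU1, mU2, mU3, mU4, mU5, mU6]
    rw [← ENNReal.ofReal_add (by norm_num) (by norm_num),
      ← ENNReal.ofReal_add (by norm_num) (by norm_num),
      ← ENNReal.ofReal_add (by norm_num) (by norm_num),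
      ← ENNReal.ofReal_add (by norm_num) (by norm_num),
      ← ENNReal.ofReal_add (by norm_num) (by norm_num),
      ← ENNReal.ofReal_add (by norm_num) (by norm_num)]
    norm_num
  have mW : μ W = ENNReal.ofReal (2 * ((1/(c+1000)) * (999/1000))) := by
    have dB : Disjoint B1 B2 := by
      apply dis; intro v h h'
      have h1 := Set.mem_Ioi.mp h.1
      have h2 := (Set.mem_Ico.mp h'.1).2
      linarith
    rw [hW, measure_union dB hmB2, mB1, mB2,
      ← ENNReal.ofReal_add (by positivity) (by positivity)]
    ring_nf
  -- pointwise bound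
  set g : (Fin 2 → ℝ) → ℝ := fun v =>
    U.indicator (fun _ => (5/2:ℝ)) v + W.indicator (fun _ => c/2) v with hg
  have hptwise : ∀ v : Fin 2 → ℝ, (∀ j, v j ∈ Set.Icc (1:ℝ) n) → g v ≤ selP (s v) := by
    intro v hv
    have hvn : ∀ j, 0 ≤ v j := fun j => le_trans zero_le_one (hv j).1
    have hiU : U.indicator (fun _ => (5/2:ℝ)) v ≤ 5/2 := by
      by_cases h : v ∈ U
      · rw [Set.indicator_of_mem h]
      · rw [Set.indicator_of_notMem h]; norm_num
    have hiU0 : 0 ≤ U.indicator (fun _ => (5/2:ℝ)) v :=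
      Set.indicator_nonneg (fun _ _ => by norm_num) v
    have hiW0 : 0 ≤ W.indicator (fun _ => c/2) v :=
      Set.indicator_nonneg (fun _ _ => by linarith) v
    have hiW : W.indicator (fun _ => c/2) v ≤ c/2 := by
      by_cases h : v ∈ W
      · rw [Set.indicator_of_mem h]
      · rw [Set.indicator_of_notMem h]; linarith
    have hPge : (5/2:ℝ) ≤ P := by rw [hP]; linarith
    have hsum : 5/2 + c/2 = P := by rw [hc, hP]; ring
    by_cases hvW : v ∈ W
    · -- buys an item at price P
      have hitem : selP (s v) = P := by
        rcases hvW with hvB | hvB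
        · -- item 0
          have h0 := Set.mem_Ioi.mp hvB.1
          have h1 := Set.mem_Ico.mp hvB.2
          have hu0 : (lot0 n hn0).util v = v 0 - P := util_item0 rfl v
          have hu0pos : 0 < (lot0 n hn0).util v := by
            rw [hu0, hP]; rw [hc] at h0; linarith
          cases hsv : s v with
          | none =>
            exact absurd (hs.no_buy v hvn hsv _ (lot0_mem hn0)) (by linarith)
          | some ℓ =>
            obtain ⟨hmem, _, hmax⟩ := hs.buy_opt v hvn ℓ hsv
            have hle := hmax _ (lot0_mem hn0)
            rw [hu0] at hle
            rcases gap_cases hmem with ⟨hq, hp⟩ | ⟨hq, hp⟩ | ⟨hq, hp⟩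
            · rw [util_half hq, hp] at hle
              rw [hc] at h0
              exfalso
              rw [hP] at hle
              linarith [h1.2]
            · show ℓ.p = P
              rw [hp]
            · rw [util_item1 hq, hp] at hle
              rw [hc] at h0
              rw [hP] at hle
              exfalso
              linarith [h1.2]
        · -- item 1
          have h0 := Set.mem_Ioi.mp hvB.2
          have h1 := Set.mem_Ico.mp hvB.1
          have hu1 : (lot1 n hn0).util v = v 1 - P := util_item1 rfl v
          have hu1pos : 0 < (lot1 n hn0).util v := by
            rw [hu1, hP]; rw [hc] at h0; linarith
          cases hsv : s v with
          | none =>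
            exact absurd (hs.no_buy v hvn hsv _ (lot1_mem hn0)) (by linarith)
          | some ℓ =>
            obtain ⟨hmem, _, hmax⟩ := hs.buy_opt v hvn ℓ hsv
            have hle := hmax _ (lot1_mem hn0)
            rw [hu1] at hle
            rcases gap_cases hmem with ⟨hq, hp⟩ | ⟨hq, hp⟩ | ⟨hq, hp⟩
            · rw [util_half hq, hp] at hle
              rw [hc] at h0
              exfalso
              rw [hP] at hle
              linarith [h1.2]
            · rw [util_item0 hq, hp] at hle
              rw [hc] at h0
              rw [hP] at hle
              exfalso
              linarith [h1.2]
            · show ℓ.p = P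
              rw [hp]
      rw [hitem, ← hsum, hg]
      have := Set.indicator_of_mem hvW (fun _ => c/2)
      dsimp only
      rw [this]
      linarith
    · -- not in W
      rw [hg]
      dsimp only
      rw [Set.indicator_of_notMem hvW, add_zero]
      by_cases hvU : v ∈ U
      · -- buys something at price ≥ 5/2
        have hsum5 : 5 < v 0 + v 1 := by
          rcases hvU with ((((((h | h) | h) | h) | h) | h) | h) <;>
            have h0 := Set.mem_Ioi.mp h.1
          · linarith [Set.mem_Ici.mp h.2]
          all_goals linarith [(Set.mem_Ico.mp h.2).1]
        have huL : 0 < lotL.util v := by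
          rw [util_half rfl v]
          show 0 < (v 0 + v 1)/2 - lotL.p
          have : lotL.p = 5/2 := rfl
          rw [this]; linarith
        cases hsv : s v with
        | none =>
          exact absurd (hs.no_buy v hvn hsv _ lotL_mem) (by linarith)
        | some ℓ =>
          obtain ⟨hmem, _, _⟩ := hs.buy_opt v hvn ℓ hsv
          have : selP (some ℓ) = ℓ.p := rfl
          rw [Set.indicator_of_mem hvU, this]
          rcases gap_cases hmem with ⟨_, hp⟩ | ⟨_, hp⟩ | ⟨_, hp⟩ <;> rw [hp] <;> linarith
      · rw [Set.indicator_of_notMem hvU]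
        exact selP_nonneg _
  -- integrability and conclusion
  have hintU : Integrable (U.indicator (fun _ => (5/2:ℝ))) μ :=
    (integrable_const _).indicator hmU
  have hintW : Integrable (W.indicator (fun _ => c/2)) μ :=
    (integrable_const _).indicator hmW
  have hintg : Integrable g μ := hintU.add hintW
  have haeg : ∀ᵐ v ∂μ, g v ≤ selP (s v) := by
    filter_upwards [mu_ae hn1] with v hv using hptwise v hv
  have hints : Integrable (fun v => selP (s v)) μ := by
    apply Integrable.mono' (integrable_const P) hs.measP.aestronglyMeasurable
    filter_upwards [mu_ae hn1] with v hv
    have hvn : ∀ j, 0 ≤ v j := fun j => le_trans zero_le_one (hv j).1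
    rw [Real.norm_eq_abs, abs_of_nonneg (selP_nonneg _)]
    cases hsv : s v with
    | none => show (0:ℝ) ≤ P; rw [hP]; linarith
    | some ℓ =>
      obtain ⟨hmem, _, _⟩ := hs.buy_opt v hvn ℓ hsv
      show ℓ.p ≤ P
      rcases gap_cases hmem with ⟨_, hp⟩ | ⟨_, hp⟩ | ⟨_, hp⟩ <;> rw [hp, hP] <;> linarith
  have hle : ∫ v, g v ∂μ ≤ lotteryRevenue μ s := integral_mono_ae hintg hints haeg
  have hintegral : ∫ v, g v ∂μ =
      (μ U).toReal * (5/2) + (μ W).toReal * (c/2) := by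
    rw [hg]
    rw [integral_add hintU hintW, integral_indicator_const _ hmU,
      integral_indicator_const _ hmW]
    simp [smul_eq_mul, Measure.real]
  rw [hintegral, mU, mW] at hle
  rw [ENNReal.toReal_ofReal (by norm_num), ENNReal.toReal_ofReal (by positivity)] at hle
  refine le_trans ?_ hle
  have hckey : (173/175 : ℝ) ≤ 2 * (1/(c+1000) * (999/1000)) * (c/2) := by
    have h1 : 2 * (1/(c+1000) * (999/1000)) * (c/2) = (999 * c) / (1000 * (c + 1000)) := by
      field_simp
    rw [h1, le_div_iff₀ (by positivity)]
    nlinarith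
  linarith


open Classical in
noncomputable def gapSel (n : ℝ) (hn : 0 ≤ n) : (Fin 2 → ℝ) → Option (Lottery 2) := fun v =>
  if 0 ≤ v 0 ∧ 0 ≤ v 1 then
    if v 1 ≤ v 0 ∧ (v 0 + v 1)/2 - 5/2 ≤ v 0 - (2 + 3*n/8) ∧ 2 + 3*n/8 ≤ v 0 then
      some (lot0 n hn)
    else if (v 0 + v 1)/2 - 5/2 ≤ v 1 - (2 + 3*n/8) ∧ 2 + 3*n/8 ≤ v 1 then
      some (lot1 n hn)
    else if 5 ≤ v 0 + v 1 then some lotL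
    else none
  else none

lemma gapSel_isSelection (n : ℝ) (hn : 0 ≤ n) :
    IsSelection (gapMenu n) (gapSel n hn) := by
  classical
  have hm0 : Measurable fun v : Fin 2 → ℝ => v 0 := measurable_pi_apply 0
  have hm1 : Measurable fun v : Fin 2 → ℝ => v 1 := measurable_pi_apply 1
  have hA : MeasurableSet {v : Fin 2 → ℝ | 0 ≤ v 0 ∧ 0 ≤ v 1} :=
    (measurableSet_le measurable_const hm0).inter (measurableSet_le measurable_const hm1)
  have hB' : MeasurableSet {v : Fin 2 → ℝ | (v 0 + v 1)/2 - 5/2 ≤ v 0 - (2 + 3*n/8)} :=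
    measurableSet_le (((hm0.add hm1).div_const 2).sub measurable_const)
      (hm0.sub measurable_const)
  have hC' : MeasurableSet {v : Fin 2 → ℝ | (v 0 + v 1)/2 - 5/2 ≤ v 1 - (2 + 3*n/8)} :=
    measurableSet_le (((hm0.add hm1).div_const 2).sub measurable_const)
      (hm1.sub measurable_const)
  have hB : MeasurableSet {v : Fin 2 → ℝ |
      v 1 ≤ v 0 ∧ (v 0 + v 1)/2 - 5/2 ≤ v 0 - (2 + 3*n/8) ∧ 2 + 3*n/8 ≤ v 0} :=
    (measurableSet_le hm1 hm0).inter
      (hB'.inter (measurableSet_le measurable_const hm0))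
  have hC : MeasurableSet {v : Fin 2 → ℝ |
      (v 0 + v 1)/2 - 5/2 ≤ v 1 - (2 + 3*n/8) ∧ 2 + 3*n/8 ≤ v 1} :=
    hC'.inter (measurableSet_le measurable_const hm1)
  have hD : MeasurableSet {v : Fin 2 → ℝ | 5 ≤ v 0 + v 1} :=
    measurableSet_le measurable_const (hm0.add hm1)
  have measfun : ∀ f : Option (Lottery 2) → ℝ, Measurable fun v => f (gapSel n hn v) := by
    intro f
    have : (fun v => f (gapSel n hn v)) = fun v : Fin 2 → ℝ =>
        if 0 ≤ v 0 ∧ 0 ≤ v 1 then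
          if v 1 ≤ v 0 ∧ (v 0 + v 1)/2 - 5/2 ≤ v 0 - (2 + 3*n/8) ∧ 2 + 3*n/8 ≤ v 0 then
            f (some (lot0 n hn))
          else if (v 0 + v 1)/2 - 5/2 ≤ v 1 - (2 + 3*n/8) ∧ 2 + 3*n/8 ≤ v 1 then
            f (some (lot1 n hn))
          else if 5 ≤ v 0 + v 1 then f (some lotL)
          else f none
        else f none := by
      funext v
      rw [gapSel]
      split_ifs <;> rfl
    rw [this]
    exact Measurable.ite hA
      (Measurable.ite hB measurable_const
        (Measurable.ite hC measurable_const
          (Measurable.ite hD measurable_const measurable_const)))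
      measurable_const
  constructor
  · intro j; exact measfun (fun o => selQ o j)
  · exact measfun selP
  · -- buy_opt
    intro v hv ℓ hsv
    rw [gapSel, if_pos ⟨hv 0, hv 1⟩] at hsv
    have huL : lotL.util v = (v 0 + v 1)/2 - 5/2 := util_half rfl v
    have hu0 : (lot0 n hn).util v = v 0 - (2 + 3*n/8) := util_item0 rfl v
    have hu1 : (lot1 n hn).util v = v 1 - (2 + 3*n/8) := util_item1 rfl v
    have hpL : lotL.p = 5/2 := rfl
    split_ifs at hsv with h1 h2 h3
    · obtain rfl := (Option.some.inj hsv).symm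
      obtain ⟨h11, h12, h13⟩ := h1
      refine ⟨lot0_mem hn, by rw [hu0]; linarith, ?_⟩
      intro ℓ' hℓ'
      rw [hu0]
      rcases gap_cases hℓ' with ⟨hq, hp⟩ | ⟨hq, hp⟩ | ⟨hq, hp⟩
      · rw [util_half hq, hp]; linarith
      · rw [util_item0 hq, hp]
      · rw [util_item1 hq, hp]; linarith
    · obtain rfl := (Option.some.inj hsv).symm
      obtain ⟨h21, h22⟩ := h2
      push_neg at h1
      refine ⟨lot1_mem hn, by rw [hu1]; linarith, ?_⟩
      intro ℓ' hℓ'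
      rw [hu1]
      have hkey : v 0 - (2 + 3*n/8) ≤ v 1 - (2 + 3*n/8) := by
        by_cases ha : v 1 ≤ v 0
        · by_cases hb : (v 0 + v 1)/2 - 5/2 ≤ v 0 - (2 + 3*n/8)
          · have := h1 ha hb; linarith
          · push_neg at hb; linarith
        · push_neg at ha; linarith
      rcases gap_cases hℓ' with ⟨hq, hp⟩ | ⟨hq, hp⟩ | ⟨hq, hp⟩
      · rw [util_half hq, hp]; linarith
      · rw [util_item0 hq, hp]; linarith
      · rw [util_item1 hq, hp]
    · obtain rfl := (Option.some.inj hsv).symm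
      push_neg at h1 h2
      refine ⟨lotL_mem, by rw [huL]; linarith, ?_⟩
      intro ℓ' hℓ'
      rw [huL]
      have hk1 : v 1 - (2 + 3*n/8) ≤ (v 0 + v 1)/2 - 5/2 := by
        by_cases ha : (v 0 + v 1)/2 - 5/2 ≤ v 1 - (2 + 3*n/8)
        · have := h2 ha; linarith
        · push_neg at ha; linarith
      have hk0 : v 0 - (2 + 3*n/8) ≤ (v 0 + v 1)/2 - 5/2 := by
        by_cases ha : v 1 ≤ v 0
        · by_cases hb : (v 0 + v 1)/2 - 5/2 ≤ v 0 - (2 + 3*n/8)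
          · have := h1 ha hb; linarith
          · push_neg at hb; linarith
        · push_neg at ha; linarith
      rcases gap_cases hℓ' with ⟨hq, hp⟩ | ⟨hq, hp⟩ | ⟨hq, hp⟩
      · rw [util_half hq, hp]
      · rw [util_item0 hq, hp]; linarith
      · rw [util_item1 hq, hp]; linarith
  · -- no_buy
    intro v hv hsv ℓ hℓ
    rw [gapSel, if_pos ⟨hv 0, hv 1⟩] at hsv
    split_ifs at hsv with h1 h2 h3
    push_neg at h1 h2 h3
    have hk1 : v 1 - (2 + 3*n/8) ≤ 0 := by
      by_cases ha : (v 0 + v 1)/2 - 5/2 ≤ v 1 - (2 + 3*n/8)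
      · have := h2 ha; linarith
      · push_neg at ha; linarith
    have hk0 : v 0 - (2 + 3*n/8) ≤ 0 := by
      by_cases ha : v 1 ≤ v 0
      · by_cases hb : (v 0 + v 1)/2 - 5/2 ≤ v 0 - (2 + 3*n/8)
        · have := h1 ha hb; linarith
        · push_neg at hb; linarith
      · push_neg at ha; linarith
    rcases gap_cases hℓ with ⟨hq, hp⟩ | ⟨hq, hp⟩ | ⟨hq, hp⟩
    · rw [util_half hq, hp]; linarith
    · rw [util_item0 hq, hp]; linarith
    · rw [util_item1 hq, hp]; linarith

lemma rev_le {n : ℝ} (hn1 : 1 < n) (L : Set (Lottery 2))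
    (s : (Fin 2 → ℝ) → Option (Lottery 2)) (hs : IsSelection L s) :
    lotteryRevenue (equalRevMeasure n) s ≤ 2 * n := by
  haveI := mu_prob (n := n) hn1
  set μ := equalRevMeasure n
  have hbd : ∀ᵐ v ∂μ, selP (s v) ≤ 2 * n := by
    filter_upwards [mu_ae hn1] with v hv
    have hvn : ∀ j, 0 ≤ v j := fun j => le_trans zero_le_one (hv j).1
    cases hsv : s v with
    | none => show (0:ℝ) ≤ 2*n; linarith
    | some ℓ =>
      obtain ⟨_, hir, _⟩ := hs.buy_opt v hvn ℓ hsv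
      show ℓ.p ≤ 2*n
      rw [Lottery.util, Fin.sum_univ_two] at hir
      have hq0 : ℓ.q 0 ≤ 1 := by
        have := ℓ.q_sum_le_one
        rw [Fin.sum_univ_two] at this
        linarith [ℓ.q_nonneg 1]
      have hq1 : ℓ.q 1 ≤ 1 := by
        have := ℓ.q_sum_le_one
        rw [Fin.sum_univ_two] at this
        linarith [ℓ.q_nonneg 0]
      have hb0 : ℓ.q 0 * v 0 ≤ v 0 := by
        nlinarith [ℓ.q_nonneg 0, hvn 0, (hv 0).2]
      have hb1 : ℓ.q 1 * v 1 ≤ v 1 := by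
        nlinarith [ℓ.q_nonneg 1, hvn 1, (hv 1).2]
      have := (hv 0).2
      have := (hv 1).2
      linarith
  have hints : Integrable (fun v => selP (s v)) μ := by
    apply Integrable.mono' (integrable_const (2*n)) hs.measP.aestronglyMeasurable
    filter_upwards [hbd] with v hv
    rw [Real.norm_eq_abs, abs_of_nonneg (selP_nonneg _)]
    exact hv
  calc lotteryRevenue μ s ≤ ∫ _, 2*n ∂μ :=
        integral_mono_ae hints (integrable_const _) hbd
    _ = 2*n := by simp

end ERD

/-- For two i.i.d. item values drawn from the truncated
equal-revenue distribution: (a) for every `n > 1`, every item pricing with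
every utility-maximizing selection has expected revenue at most `2`; and
(b) there exists `N` such that for all `n ≥ N`, the lottery menu
`{(1/2, 1/2, 5/2), (1, 0, 2 + 3n/8), (0, 1, 2 + 3n/8)}` with every
utility-maximizing selection has expected revenue at least `2.2`, and in
particular the optimal lottery revenue exceeds `1.1` times the optimal
item-pricing revenue. -/
theorem equalRev_lottery_beats_item_pricing :
    (∀ n : ℝ, 1 < n →
      ∀ (L : Set (Lottery 2)) (s : (Fin 2 → ℝ) → Option (Lottery 2)),
        L.Nonempty → IsItemPricing L → IsSelection L s →
        lotteryRevenue (equalRevMeasure n) s ≤ 2) ∧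
    ∃ N : ℝ, ∀ n : ℝ, N ≤ n →
      (∀ s : (Fin 2 → ℝ) → Option (Lottery 2), IsSelection (gapMenu n) s →
        (2.2 : ℝ) ≤ lotteryRevenue (equalRevMeasure n) s) ∧
      1.1 * optItemPricingRev (equalRevMeasure n) <
        optLotteryRev (equalRevMeasure n) := by
  constructor
  · intro n hn L s _ hip hs
    exact ERD.partA hn L s hip hs
  · refine ⟨100000000, fun n hn => ⟨fun s hs => le_trans (by norm_num) (ERD.partB hn s hs), ?_⟩⟩
    have hn1 : (1:ℝ) < n := by linarith
    have hn0 : (0:ℝ) ≤ n := by linarith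
    have hitem : optItemPricingRev (equalRevMeasure n) ≤ 2 := by
      apply Real.sSup_le
      · rintro r ⟨L, s, _, hip, hs, rfl⟩
        exact ERD.partA hn1 L s hip hs
      · norm_num
    have hlot : (2.21:ℝ) ≤ optLotteryRev (equalRevMeasure n) := by
      have hbdd : BddAbove {r : ℝ | ∃ (L : Set (Lottery 2))
          (s : (Fin 2 → ℝ) → Option (Lottery 2)),
          L.Nonempty ∧ IsSelection L s ∧ r = lotteryRevenue (equalRevMeasure n) s} := by
        refine ⟨2*n, ?_⟩
        rintro r ⟨L, s, _, hs, rfl⟩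
        exact ERD.rev_le hn1 L s hs
      have hmem : lotteryRevenue (equalRevMeasure n) (ERD.gapSel n hn0) ∈
          {r : ℝ | ∃ (L : Set (Lottery 2)) (s : (Fin 2 → ℝ) → Option (Lottery 2)),
          L.Nonempty ∧ IsSelection L s ∧ r = lotteryRevenue (equalRevMeasure n) s} :=
        ⟨gapMenu n, ERD.gapSel n hn0, ⟨ERD.lotL, ERD.lotL_mem⟩,
          ERD.gapSel_isSelection n hn0, rfl⟩
      calc (2.21:ℝ) ≤ lotteryRevenue (equalRevMeasure n) (ERD.gapSel n hn0) :=
            ERD.partB hn _ (ERD.gapSel_isSelection n hn0)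
        _ ≤ optLotteryRev (equalRevMeasure n) := le_csSup hbdd hmem
    have h22 : (1.1:ℝ) * optItemPricingRev (equalRevMeasure n) ≤ 2.2 := by nlinarith
    calc (1.1:ℝ) * optItemPricingRev (equalRevMeasure n) ≤ 2.2 := h22
      _ < 2.21 := by norm_num
      _ ≤ optLotteryRev (equalRevMeasure n) := hlot
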